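/- arXiv:1702.00796 — 3 statements merged into one kernel-verified Lean document; each statement's English description precedes it below -/
import Mathlib

section
/- Let k ≥ 2 and let M be the (N+kr)×(N+kr) matrix with the block structure: F (N×N) in the top-left, each of the k blocks in the top row equal to H, each of the k blocks in the left column equal to L, and (s,t) circulant block M_{(t−s) mod k}. Let S = I_N ⊕ R where R has (s,t) block ω^{st} I_r with ω = e^{2πi/k}. Then S⁻¹ M S = M_φ ⊕ B₁ ⊕ ⋯ ⊕ B_{k−1}, where M_φ = [F, kH; L, B₀] and B_j = Σ_{m=0}^{k−1} ω^{jm} M_m. -/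
open Matrix Finset

/-- With `S = I_N ⊕ R`, `R` the block Vandermonde matrix, we have
`S⁻¹ M S = M_φ ⊕ B₁ ⊕ ⋯ ⊕ B_{k-1}`, where `M_φ = [F, kH; L, B₀]`. -/
theorem stmt_6 (k r N : ℕ) (hk : 2 ≤ k) (ω : ℂ)
    (hω : ω = Complex.exp (2 * Real.pi * Complex.I / k))
    (F : Matrix (Fin N) (Fin N) ℂ) (H : Matrix (Fin N) (Fin r) ℂ)
    (L : Matrix (Fin r) (Fin N) ℂ)
    (Ms : Fin k → Matrix (Fin r) (Fin r) ℂ)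
    (B : Fin k → Matrix (Fin r) (Fin r) ℂ)
    (hB : ∀ j : Fin k, B j = ∑ m : Fin k, ω ^ ((j : ℕ) * (m : ℕ)) • Ms m)
    (M : Matrix (Fin N ⊕ Fin k × Fin r) (Fin N ⊕ Fin k × Fin r) ℂ)
    (hM₁ : ∀ a b : Fin N, M (Sum.inl a) (Sum.inl b) = F a b)
    (hM₂ : ∀ a : Fin N, ∀ t : Fin k, ∀ j : Fin r, M (Sum.inl a) (Sum.inr (t, j)) = H a j)
    (hM₃ : ∀ s : Fin k, ∀ i : Fin r, ∀ b : Fin N, M (Sum.inr (s, i)) (Sum.inl b) = L i b)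
    (hM₄ : ∀ s t : Fin k, ∀ i j : Fin r,
      M (Sum.inr (s, i)) (Sum.inr (t, j)) = Ms (t - s) i j)
    (S : Matrix (Fin N ⊕ Fin k × Fin r) (Fin N ⊕ Fin k × Fin r) ℂ)
    (hS₁ : ∀ a b : Fin N, S (Sum.inl a) (Sum.inl b) = if a = b then 1 else 0)
    (hS₂ : ∀ a : Fin N, ∀ p : Fin k × Fin r, S (Sum.inl a) (Sum.inr p) = 0)
    (hS₃ : ∀ p : Fin k × Fin r, ∀ b : Fin N, S (Sum.inr p) (Sum.inl b) = 0)
    (hS₄ : ∀ s t : Fin k, ∀ i j : Fin r,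
      S (Sum.inr (s, i)) (Sum.inr (t, j)) = ω ^ ((s : ℕ) * (t : ℕ)) * (if i = j then 1 else 0))
    -- `D` is the block-diagonal matrix `M_φ ⊕ B₁ ⊕ ⋯ ⊕ B_{k-1}`, where the divisor matrix
    -- `M_φ = [F, kH; L, B₀]` occupies the `Fin N` block together with the `0`-th circulant block.
    (D : Matrix (Fin N ⊕ Fin k × Fin r) (Fin N ⊕ Fin k × Fin r) ℂ)
    (hD₁ : ∀ a b : Fin N, D (Sum.inl a) (Sum.inl b) = F a b)
    (hD₂ : ∀ a : Fin N, ∀ t : Fin k, ∀ j : Fin r,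
      D (Sum.inl a) (Sum.inr (t, j)) = if (t : ℕ) = 0 then (k : ℂ) * H a j else 0)
    (hD₃ : ∀ s : Fin k, ∀ i : Fin r, ∀ b : Fin N,
      D (Sum.inr (s, i)) (Sum.inl b) = if (s : ℕ) = 0 then L i b else 0)
    (hD₄ : ∀ s t : Fin k, ∀ i j : Fin r,
      D (Sum.inr (s, i)) (Sum.inr (t, j)) = if s = t then B s i j else 0) :
    IsUnit S.det ∧ S⁻¹ * M * S = D := by

  haveI : NeZero k := ⟨by omega⟩
  have hkpos : 0 < k := by omega
  have hprim : IsPrimitiveRoot ω k := by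
    rw [hω]; exact Complex.isPrimitiveRoot_exp k (by omega)
  have hωk : ω ^ k = 1 := hprim.pow_eq_one
  have hω0 : ω ≠ 0 := by
    intro h
    rw [h, zero_pow (by omega)] at hωk
    exact one_ne_zero hωk.symm
  have hkC : (k : ℂ) ≠ 0 := Nat.cast_ne_zero.mpr (by omega)
  -- geometric sum of a k-th root of unity
  have hgeom : ∀ x : ℂ, x ^ k = 1 → ∑ t : Fin k, x ^ (t : ℕ) =
      if x = 1 then (k : ℂ) else 0 := by
    intro x hx
    rw [Fin.sum_univ_eq_sum_range (fun t => x ^ t) k]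
    split_ifs with h
    · simp [h]
    · rw [geom_sum_eq h, hx]; simp
  have hsum : ∀ u : Fin k, ∑ t : Fin k, ω ^ ((t : ℕ) * (u : ℕ)) =
      if (u : ℕ) = 0 then (k : ℂ) else 0 := by
    intro u
    have h1 : ∀ t : Fin k, ω ^ ((t : ℕ) * (u : ℕ)) = (ω ^ (u : ℕ)) ^ (t : ℕ) := fun t => by
      rw [← pow_mul, mul_comm]
    simp_rw [h1]
    rw [hgeom _ (by rw [← pow_mul, mul_comm, pow_mul, hωk, one_pow])]
    by_cases hu : (u : ℕ) = 0
    · simp [hu]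
    · rw [if_neg hu, if_neg (hprim.pow_ne_one_of_pos_of_lt hu u.isLt)]
  have hmod : ∀ a : ℕ, ω ^ a = ω ^ (a % k) := by
    intro a
    conv_lhs => rw [← Nat.mod_add_div a k]
    rw [pow_add, pow_mul, hωk, one_pow, mul_one]
  have hcong : ∀ a b : ℕ, a % k = b % k → ω ^ a = ω ^ b := by
    intro a b h; rw [hmod a, hmod b, h]
  -- the explicit inverse of S
  set T : Matrix (Fin N ⊕ Fin k × Fin r) (Fin N ⊕ Fin k × Fin r) ℂ :=
    Matrix.of (fun x y =>
      match x, y with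
      | Sum.inl a, Sum.inl b => if a = b then 1 else 0
      | Sum.inl _, Sum.inr _ => 0
      | Sum.inr _, Sum.inl _ => 0
      | Sum.inr (s, i), Sum.inr (t, j) =>
          (k : ℂ)⁻¹ * ω ^ (-(((s : ℕ) * (t : ℕ) : ℕ) : ℤ)) * (if i = j then 1 else 0)) with hT
  have hTS : T * S = 1 := by
    ext x y
    rcases x with a | ⟨s, i⟩ <;> rcases y with b | ⟨u, j⟩ <;>
      simp only [Matrix.mul_apply, Fintype.sum_sum_type, Fintype.sum_prod_type, hT,
        Matrix.of_apply, hS₁, hS₂, hS₃, hS₄, Matrix.one_apply]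
    · simp [Finset.sum_ite_eq, ite_mul]
    · simp [Prod.ext_iff]
    · simp
    · -- main block
      have key : ∀ t : Fin k,
          ∑ l : Fin r, (k : ℂ)⁻¹ * ω ^ (-(((s : ℕ) * (t : ℕ) : ℕ) : ℤ)) * (if i = l then 1 else 0) *
            (ω ^ ((t : ℕ) * (u : ℕ)) * (if l = j then 1 else 0)) =
          (if i = j then 1 else 0) * ((k : ℂ)⁻¹ *
            (ω ^ (((u : ℤ) - (s : ℤ)))) ^ (t : ℕ)) := by
        intro t
        rw [Finset.sum_eq_single i]
        · have : ω ^ (-(((s : ℕ) * (t : ℕ) : ℕ) : ℤ)) * ω ^ ((t : ℕ) * (u : ℕ)) =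
              (ω ^ ((u : ℤ) - (s : ℤ))) ^ (t : ℕ) := by
            rw [← zpow_natCast ω ((t : ℕ) * (u : ℕ)), ← zpow_add₀ hω0,
              ← zpow_natCast (ω ^ ((u : ℤ) - (s : ℤ))) (t : ℕ), ← _root_.zpow_mul]
            congr 1
            push_cast
            ring
          rw [if_pos rfl, mul_one, mul_assoc ((k : ℂ)⁻¹),
            ← mul_assoc (ω ^ (-(((s : ℕ) * (t : ℕ) : ℕ) : ℤ))), this]
          ring
        · intro l _ hl
          simp [Ne.symm hl]
        · simp
      simp_rw [key, ← Finset.mul_sum]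
      simp only [Finset.sum_const_zero, zero_mul, mul_zero, zero_add, add_zero]
      have hx : (ω ^ ((u : ℤ) - (s : ℤ))) ^ k = 1 := by
        rw [← _root_.zpow_natCast (ω ^ ((u : ℤ) - (s : ℤ))) k, ← _root_.zpow_mul, mul_comm,
          _root_.zpow_mul, _root_.zpow_natCast, hωk, _root_.one_zpow]
      rw [hgeom _ hx]
      have hiff : (ω ^ ((u : ℤ) - (s : ℤ)) = 1) ↔ s = u := by
        constructor
        · intro h
          rw [zpow_sub₀ hω0, div_eq_one_iff_eq (zpow_ne_zero _ hω0),
            _root_.zpow_natCast, _root_.zpow_natCast] at h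
          exact (Fin.ext (hprim.pow_inj u.isLt s.isLt h)).symm
        · rintro rfl; simp
      by_cases hsu : s = u
      · subst hsu
        rw [if_pos (hiff.mpr rfl)]
        simp [inv_mul_cancel₀ hkC, Prod.ext_iff]
      · rw [if_neg (fun h => hsu (hiff.mp h))]
        simp [Prod.ext_iff, hsu]
  have hdet : IsUnit S.det := Matrix.isUnit_det_of_left_inverse hTS
  refine ⟨hdet, ?_⟩
  -- main identity: M * S = S * D
  have hMS : M * S = S * D := by
    ext x y
    rcases x with a | ⟨s, i⟩ <;> rcases y with b | ⟨u, j⟩ <;>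
      simp only [Matrix.mul_apply, Fintype.sum_sum_type, Fintype.sum_prod_type,
        hM₁, hM₂, hM₃, hM₄, hS₁, hS₂, hS₃, hS₄, hD₁, hD₂, hD₃, hD₄]
    · -- (inl, inl)
      simp [ite_mul, mul_ite, Finset.sum_ite_eq, Finset.sum_ite_eq']
    · -- (inl, inr)
      have hval0 : ∀ t : Fin k, ((t : ℕ) = 0) ↔ t = (0 : Fin k) := by
        intro t; rw [Fin.ext_iff]; simp
      simp only [mul_ite, mul_one, mul_zero, Finset.sum_ite_eq, Finset.mem_univ, if_true,
        ite_mul, zero_mul, Finset.sum_ite_eq']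
      simp only [Finset.sum_const_zero, zero_add]
      rw [← Finset.mul_sum, hsum u]
      by_cases h : (u : ℕ) = 0
      · simp only [h, if_true, Finset.sum_ite_eq, Finset.mem_univ]
        simp [Finset.sum_ite_eq]
        ring
      · simp [h]
    · -- (inr, inl)
      have hval0 : ∀ t : Fin k, ((t : ℕ) = 0) ↔ t = (0 : Fin k) := by
        intro t; rw [Fin.ext_iff]; simp
      simp only [mul_ite, mul_one, mul_zero, ite_mul, zero_mul, Finset.sum_ite_eq,
        Finset.mem_univ, if_true, Finset.sum_ite_eq', hval0]
      simp [Finset.sum_ite_eq, mul_ite]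
    · -- (inr, inr): the key circulant computation
      have lhs_eq : ∑ t : Fin k, ∑ l : Fin r,
          Ms (t - s) i l * (ω ^ ((t : ℕ) * (u : ℕ)) * (if l = j then 1 else 0)) =
          ∑ t : Fin k, Ms (t - s) i j * ω ^ ((t : ℕ) * (u : ℕ)) := by
        apply Finset.sum_congr rfl
        intro t _
        rw [Finset.sum_eq_single j] <;> simp +contextual [Ne.symm]
      have rhs_eq : ∑ t : Fin k, ∑ l : Fin r,
          ω ^ ((s : ℕ) * (t : ℕ)) * (if i = l then 1 else 0) *
            (if t = u then B t l j else 0) =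
          ω ^ ((s : ℕ) * (u : ℕ)) * B u i j := by
        rw [Finset.sum_eq_single u]
        · rw [Finset.sum_eq_single i] <;> simp +contextual [Ne.symm]
        · intro t _ ht; simp [ht]
        · simp
      rw [lhs_eq, rhs_eq, hB u]
      simp only [Matrix.sum_apply, Matrix.smul_apply, smul_eq_mul, Finset.mul_sum]
      rw [← Equiv.sum_comp (Equiv.addLeft s) (fun t => Ms (t - s) i j * ω ^ ((t : ℕ) * (u : ℕ)))]
      simp only [mul_zero, zero_mul, Finset.sum_const_zero, zero_add, ite_self]
      apply Finset.sum_congr rfl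
      intro m _
      simp only [Equiv.coe_addLeft, add_sub_cancel_left]
      have hexp : ω ^ (((s + m : Fin k) : ℕ) * (u : ℕ)) =
          ω ^ ((s : ℕ) * (u : ℕ)) * ω ^ ((u : ℕ) * (m : ℕ)) := by
        rw [← pow_add]
        apply hcong
        have : ((s + m : Fin k) : ℕ) = ((s : ℕ) + (m : ℕ)) % k := by
          rw [Fin.add_def]
        rw [this]
        conv_rhs => rw [show (s : ℕ) * (u : ℕ) + (u : ℕ) * (m : ℕ) =
          ((s : ℕ) + (m : ℕ)) * (u : ℕ) by ring]
        rw [Nat.mul_mod, Nat.mod_mod_of_dvd _ dvd_rfl]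
        conv_rhs => rw [Nat.mul_mod]
      rw [hexp]
      ring
  calc S⁻¹ * M * S = S⁻¹ * (M * S) := by rw [mul_assoc]
    _ = S⁻¹ * S * D := by rw [hMS, mul_assoc]
    _ = D := by rw [Matrix.nonsing_inv_mul S hdet, one_mul]
end

section
/- Let k ≥ 2, ω = e^{2πi/k}, and M₀,…,M_{k−1} be r×r complex matrices, with M the kr×kr block-circulant matrix built from them. For each j ∈ {0,…,k−1} and each row index i ∈ {1,…,r}, the Gershgorin disk of row i of B_j = Σ_{m=0}^{k−1} ω^{jm} M_m is contained in the Gershgorin disk of the corresponding row i of M; that is, |M_{ii}^{(0)} − [B_j]_{ii}| ≤ Σ_{l≠i, l in full index set} |M_{il}| − Σ_{l≠i}^r |[B_j]_{il}|, where M_{ii}^{(0)} = [M₀]_{ii} is the diagonal entry of M in that row. -/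
open Matrix Finset

/-- Each Gershgorin disk of `B_j = Σ_m ω^{jm} M_m` is contained in the corresponding
Gershgorin disk of the block-circulant matrix `M`: the distance between the centers is
at most the difference of the radii. -/
theorem stmt_11 (k r : ℕ) (hk : 2 ≤ k) (ω : ℂ)
    (hω : ω = Complex.exp (2 * Real.pi * Complex.I / k))
    (Ms : Fin k → Matrix (Fin r) (Fin r) ℂ)
    (B : Fin k → Matrix (Fin r) (Fin r) ℂ)
    (hB : ∀ j : Fin k, B j = ∑ m : Fin k, ω ^ ((j : ℕ) * (m : ℕ)) • Ms m)
    (M : Matrix (Fin k × Fin r) (Fin k × Fin r) ℂ)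
    (hM : ∀ s t : Fin k, ∀ i j : Fin r, M (s, i) (t, j) = Ms (t - s) i j)
    (j : Fin k) (i : Fin r) (z : Fin k) (hz : (z : ℕ) = 0) :
    ‖M (z, i) (z, i) - B j i i‖ ≤
      (∑ p ∈ Finset.univ.erase (z, i), ‖M (z, i) p‖) -
        ∑ l ∈ Finset.univ.erase i, ‖B j i l‖ := by
  haveI : NeZero k := ⟨by omega⟩
  have hz0 : z = 0 := by
    ext
    simp [hz]
  subst hz0
  have habs : ‖ω‖ = 1 := by
    rw [hω, Complex.norm_exp]
    have : (2 * ↑Real.pi * Complex.I / ↑k).re = 0 := by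
      simp [Complex.div_re]
    rw [this, Real.exp_zero]
  have hMe : ∀ t : Fin k, ∀ l : Fin r, M (0, i) (t, l) = Ms t i l := by
    intro t l
    rw [hM]
    simp
  have hBe : ∀ l : Fin r, B j i l = ∑ m : Fin k, ω ^ ((j : ℕ) * (m : ℕ)) * Ms m i l := by
    intro l
    rw [hB]
    simp [Matrix.sum_apply]
  have habsB : ∀ l : Fin r,
      ‖B j i l‖ ≤ ∑ m : Fin k, ‖Ms m i l‖ := by
    intro l
    rw [hBe]
    refine le_trans (norm_sum_le _ _) ?_
    apply Finset.sum_le_sum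
    intro m _
    rw [norm_mul, norm_pow, habs, one_pow, one_mul]
  -- center distance bound
  have hcenter : ‖M (0, i) (0, i) - B j i i‖ ≤
      ∑ m ∈ Finset.univ.erase (0 : Fin k), ‖Ms m i i‖ := by
    rw [hMe, hBe]
    have h0 : (∑ m : Fin k, ω ^ ((j : ℕ) * (m : ℕ)) * Ms m i i) =
        Ms 0 i i + ∑ m ∈ Finset.univ.erase (0 : Fin k), ω ^ ((j : ℕ) * (m : ℕ)) * Ms m i i := by
      rw [← Finset.add_sum_erase _ _ (Finset.mem_univ (0 : Fin k))]
      simp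
    rw [h0]
    have : Ms 0 i i - (Ms 0 i i + ∑ m ∈ Finset.univ.erase (0 : Fin k),
        ω ^ ((j : ℕ) * (m : ℕ)) * Ms m i i) =
        -∑ m ∈ Finset.univ.erase (0 : Fin k), ω ^ ((j : ℕ) * (m : ℕ)) * Ms m i i := by
      ring
    rw [this, norm_neg]
    refine le_trans (norm_sum_le _ _) ?_
    apply Finset.sum_le_sum
    intro m _
    rw [norm_mul, norm_pow, habs, one_pow, one_mul]
  -- radius sum for M
  have hMsum : (∑ p ∈ Finset.univ.erase ((0 : Fin k), i), ‖M (0, i) p‖) =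
      (∑ m : Fin k, ∑ l : Fin r, ‖Ms m i l‖) - ‖Ms 0 i i‖ := by
    rw [Finset.sum_erase_eq_sub (Finset.mem_univ _)]
    rw [hMe]
    congr 1
    rw [Fintype.sum_prod_type]
    exact Finset.sum_congr rfl fun m _ => Finset.sum_congr rfl fun l _ => by rw [hMe]
  rw [hMsum]
  have hBsum : (∑ l ∈ Finset.univ.erase i, ‖B j i l‖) ≤
      ∑ m : Fin k, ((∑ l : Fin r, ‖Ms m i l‖) - ‖Ms m i i‖) := by
    refine le_trans (Finset.sum_le_sum fun l _ => habsB l) ?_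
    rw [Finset.sum_comm]
    apply Finset.sum_le_sum
    intro m _
    rw [← Finset.sum_erase_eq_sub (Finset.mem_univ i)]
  have key : (∑ m ∈ Finset.univ.erase (0 : Fin k), ‖Ms m i i‖) =
      (∑ m : Fin k, ‖Ms m i i‖) - ‖Ms 0 i i‖ :=
    Finset.sum_erase_eq_sub (Finset.mem_univ _)
  have hsplit : (∑ m : Fin k, ((∑ l : Fin r, ‖Ms m i l‖) - ‖Ms m i i‖)) =
      (∑ m : Fin k, ∑ l : Fin r, ‖Ms m i l‖) - ∑ m : Fin k, ‖Ms m i i‖ := by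
    rw [Finset.sum_sub_distrib]
  rw [hsplit] at hBsum
  linarith [hcenter, hBsum, key.symm ▸ hcenter]
end

section
/- Let k ≥ 2, ω = e^{2πi/k}, and M₀,…,M_{k−1} be r×r complex matrices with M the associated kr×kr block-circulant matrix. Then the Gershgorin region of the block-diagonal matrix B₀ ⊕ B₁ ⊕ ⋯ ⊕ B_{k−1} (with B_j = Σ_m ω^{jm} M_m) is contained in the Gershgorin region of M. -/
open Matrix Finset

/-- The Gershgorin region of the block-diagonal matrix `B₀ ⊕ ⋯ ⊕ B_{k-1}` is contained in
the Gershgorin region of the block-circulant matrix `M`. -/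
theorem stmt_12 (k r : ℕ) (hk : 2 ≤ k) (ω : ℂ)
    (hω : ω = Complex.exp (2 * Real.pi * Complex.I / k))
    (Ms : Fin k → Matrix (Fin r) (Fin r) ℂ)
    (B : Fin k → Matrix (Fin r) (Fin r) ℂ)
    (hB : ∀ j : Fin k, B j = ∑ m : Fin k, ω ^ ((j : ℕ) * (m : ℕ)) • Ms m)
    (M : Matrix (Fin k × Fin r) (Fin k × Fin r) ℂ)
    (hM : ∀ s t : Fin k, ∀ i j : Fin r, M (s, i) (t, j) = Ms (t - s) i j)
    (D : Matrix (Fin k × Fin r) (Fin k × Fin r) ℂ)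
    (hD : ∀ s t : Fin k, ∀ i j : Fin r, D (s, i) (t, j) = if s = t then B s i j else 0)
    (z : ℂ)
    (hz : ∃ p : Fin k × Fin r,
      ‖z - D p p‖ ≤ ∑ q ∈ Finset.univ.erase p, ‖D p q‖) :
    ∃ p : Fin k × Fin r,
      ‖z - M p p‖ ≤ ∑ q ∈ Finset.univ.erase p, ‖M p q‖ := by
  haveI : NeZero k := ⟨by omega⟩
  obtain ⟨⟨s, i⟩, hp⟩ := hz
  refine ⟨(s, i), ?_⟩
  have hω1 : ‖ω‖ = 1 := by
    rw [hω, Complex.norm_exp]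
    have h0 : (2 * Real.pi * Complex.I / (k : ℂ)).re = 0 := by
      simp [Complex.div_re]
    rw [h0, Real.exp_zero]
  have hωn : ∀ n : ℕ, ‖ω ^ n‖ = 1 := fun n => by
    rw [norm_pow, hω1, one_pow]
  have hBe : ∀ j : Fin r, B s i j = ∑ m : Fin k, ω ^ ((s : ℕ) * (m : ℕ)) * Ms m i j := by
    intro j
    rw [hB]
    simp [Matrix.sum_apply]
  have hBabs : ∀ j : Fin r,
      ‖B s i j‖ ≤ ∑ m : Fin k, ‖Ms m i j‖ := by
    intro j
    rw [hBe]
    refine le_trans (norm_sum_le _ _) (le_of_eq ?_)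
    refine Finset.sum_congr rfl fun m _ => ?_
    rw [norm_mul, hωn, one_mul]
  set T : ℝ := ∑ m : Fin k, ∑ j : Fin r, ‖Ms m i j‖ with hT
  have hM0 : M (s, i) (s, i) = Ms 0 i i := by rw [hM]; simp
  have hDpp : D (s, i) (s, i) = B s i i := by rw [hD]; simp
  -- LHS row sum of M
  have hLHS : ∑ q ∈ Finset.univ.erase (s, i), ‖M (s, i) q‖
      = T - ‖Ms 0 i i‖ := by
    rw [Finset.sum_erase_eq_sub (Finset.mem_univ _), hM0]
    congr 1
    rw [Fintype.sum_prod_type]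
    calc ∑ t : Fin k, ∑ j : Fin r, ‖M (s, i) (t, j)‖
        = ∑ t : Fin k, ∑ j : Fin r, ‖Ms (t - s) i j‖ := by
          simp [hM]
      _ = T := Fintype.sum_equiv (Equiv.subRight s) _ _ (fun t => rfl)
  -- row sum of D
  have hDrow : ∑ q ∈ Finset.univ.erase (s, i), ‖D (s, i) q‖
      = (∑ j : Fin r, ‖B s i j‖) - ‖B s i i‖ := by
    rw [Finset.sum_erase_eq_sub (Finset.mem_univ _), hDpp]
    congr 1
    rw [Fintype.sum_prod_type]
    simp [hD, apply_ite norm, Finset.sum_ite_eq]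
  -- splitting off the m = 0 term of B s i i
  have h1 : ‖z - Ms 0 i i‖
      ≤ ‖z - B s i i‖
        + ((∑ m : Fin k, ‖Ms m i i‖) - ‖Ms 0 i i‖) := by
    have hsplit : B s i i = Ms 0 i i
        + ∑ m ∈ Finset.univ.erase (0 : Fin k), ω ^ ((s : ℕ) * (m : ℕ)) * Ms m i i := by
      rw [hBe, ← Finset.add_sum_erase _ _ (Finset.mem_univ (0 : Fin k))]
      norm_num
    have h2 : z - Ms 0 i i = (z - B s i i)
        + ∑ m ∈ Finset.univ.erase (0 : Fin k), ω ^ ((s : ℕ) * (m : ℕ)) * Ms m i i := by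
      rw [hsplit]; ring
    rw [h2]
    refine le_trans (norm_add_le _ _) ?_
    refine add_le_add_right (le_trans (norm_sum_le _ _) (le_of_eq ?_)) _
    rw [Finset.sum_erase_eq_sub (Finset.mem_univ (0 : Fin k))]
    congr 1
    · refine Finset.sum_congr rfl fun m _ => ?_
      rw [norm_mul, hωn, one_mul]
    · rw [norm_mul, hωn, one_mul]
  -- the off-diagonal B bound
  have h3 : (∑ j : Fin r, ‖B s i j‖) - ‖B s i i‖
      ≤ T - ∑ m : Fin k, ‖Ms m i i‖ := by
    rw [← Finset.sum_erase_eq_sub (Finset.mem_univ i)]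
    have hTalt : T = ∑ j : Fin r, ∑ m : Fin k, ‖Ms m i j‖ := Finset.sum_comm
    rw [hTalt, ← Finset.sum_erase_eq_sub (ι := Fin r) (Finset.mem_univ i)]
    exact Finset.sum_le_sum fun j _ => hBabs j
  rw [hM0, hLHS]
  have hp' := hp
  rw [hDpp, hDrow] at hp'
  calc ‖z - Ms 0 i i‖
      ≤ ‖z - B s i i‖
        + ((∑ m : Fin k, ‖Ms m i i‖) - ‖Ms 0 i i‖) := h1
    _ ≤ ((∑ j : Fin r, ‖B s i j‖) - ‖B s i i‖)
        + ((∑ m : Fin k, ‖Ms m i i‖) - ‖Ms 0 i i‖) :=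
          add_le_add_left hp' _
    _ ≤ (T - ∑ m : Fin k, ‖Ms m i i‖)
        + ((∑ m : Fin k, ‖Ms m i i‖) - ‖Ms 0 i i‖) :=
          add_le_add_left h3 _
    _ = T - ‖Ms 0 i i‖ := by ring
end
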